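/- For the discrete-time positive system x(t+1) = Fx(t) + Bu(t) with F = I + A entrywise nonnegative and k ≥ n: the system is positively reachable in k steps if and only if [B, FB, …, F^{n−1}B] contains an n×n monomial submatrix; in particular, reachability in k steps is equivalent to reachability in n steps. -/

import Mathlib

open scoped Matrix Classical
open MeasureTheory

attribute [local instance] Matrix.linftyOpNormedRing Matrix.linftyOpNormedAlgebra

/-- A nonnegative square matrix is monomial: each row and each column contains
exactly one strictly positive entry, all other entries being zero. -/
def IsMonomial {n : ℕ} (A : Matrix (Fin n) (Fin n) ℝ) : Prop :=
  (∀ i j, 0 ≤ A i j) ∧ (∀ i, ∃! j, 0 < A i j) ∧ (∀ j, ∃! i, 0 < A i j)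

/-- Positive reachability in `k` steps from 0 for the discrete-time system
`x(t+1) = F x(t) + B u(t)`. -/
def PosReach {n m : ℕ} (F : Matrix (Fin n) (Fin n) ℝ) (B : Matrix (Fin n) (Fin m) ℝ)
    (k : ℕ) : Prop :=
  ∀ xbar : Fin n → ℝ, (∀ i, 0 ≤ xbar i) →
    ∃ u : ℕ → Fin m → ℝ, (∀ j i, 0 ≤ u j i) ∧
      xbar = ∑ i ∈ Finset.range k, (F ^ i).mulVec (B.mulVec (u i))

set_option linter.unusedSectionVars false
namespace PRC

variable {α : Type*} [Fintype α] [DecidableEq α] (G : α → Finset α)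

/-- One-step support map. -/
def Phi (S : Finset α) : Finset α := S.biUnion G

/-- `j`-step reach set from a single node. -/
def r (j : ℕ) (w : α) : Finset α := (Phi G)^[j] {w}

lemma phi_biUnion (S : Finset α) (f : α → Finset α) :
    Phi G (S.biUnion f) = S.biUnion fun w => Phi G (f w) :=
  Finset.biUnion_biUnion _ _ _

lemma iter_eq_biUnion (j : ℕ) (S : Finset α) :
    (Phi G)^[j] S = S.biUnion (r G j) := by
  induction j with
  | zero =>
      simp only [Function.iterate_zero, id_eq]
      exact (Finset.biUnion_singleton_eq_self).symm
  | succ j ih =>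
      rw [Function.iterate_succ_apply', ih, phi_biUnion]
      ext x
      simp [r, Function.iterate_succ_apply']

lemma r_zero (w : α) : r G 0 w = {w} := rfl

lemma r_succ (j : ℕ) (w : α) : r G (j+1) w = Phi G (r G j w) := by
  simp [r, Function.iterate_succ_apply']

lemma r_add (i j : ℕ) (w : α) : r G (i + j) w = (Phi G)^[j] (r G i w) := by
  simp [r, Function.iterate_add_apply, Nat.add_comm i j]

lemma r_succ' (j : ℕ) (w : α) : r G (j+1) w = (G w).biUnion (r G j) := by
  have : r G (j+1) w = (Phi G)^[j] (Phi G {w}) := by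
    simp [r, Function.iterate_succ_apply]
  rw [this, iter_eq_biUnion]
  congr 1
  simp [Phi]

lemma phi_empty : Phi G (∅ : Finset α) = ∅ := by simp [Phi]

lemma iter_empty (j : ℕ) : (Phi G)^[j] (∅ : Finset α) = ∅ := by
  induction j with
  | zero => rfl
  | succ j ih => rw [Function.iterate_succ_apply', ih, phi_empty]

lemma phi_mono {S T : Finset α} (h : S ⊆ T) : Phi G S ⊆ Phi G T :=
  Finset.biUnion_subset_biUnion_of_subset_left _ h

lemma iter_mono (j : ℕ) {S T : Finset α} (h : S ⊆ T) : (Phi G)^[j] S ⊆ (Phi G)^[j] T := by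
  induction j generalizing S T with
  | zero => exact h
  | succ j ih => 
      rw [Function.iterate_succ_apply', Function.iterate_succ_apply']
      exact phi_mono G (ih h)

/-- Characterization of `Φ^[j] S = {l}`. -/
lemma iter_eq_singleton_iff (j : ℕ) (S : Finset α) (l : α) :
    (Phi G)^[j] S = {l} ↔
      (∀ w ∈ S, r G j w = {l} ∨ r G j w = ∅) ∧ (∃ w ∈ S, r G j w = {l}) := by
  rw [iter_eq_biUnion]
  constructor
  · intro h
    constructor
    · intro w hw
      have hsub : r G j w ⊆ {l} := by
        rw [← h]; exact Finset.subset_biUnion_of_mem _ hw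
      rcases Finset.subset_singleton_iff.mp hsub with h' | h'
      · right; exact h'
      · left; exact h'
    · have : l ∈ S.biUnion (r G j) := by rw [h]; exact Finset.mem_singleton_self l
      rcases Finset.mem_biUnion.mp this with ⟨w, hw, hl⟩
      refine ⟨w, hw, ?_⟩
      have hsub : r G j w ⊆ {l} := by
        rw [← h]; exact Finset.subset_biUnion_of_mem _ hw
      rcases Finset.subset_singleton_iff.mp hsub with h' | h'
      · rw [h'] at hl; exact absurd hl (Finset.notMem_empty l)
      · exact h'
  · rintro ⟨hall, w, hw, hwl⟩
    apply Finset.Subset.antisymm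
    · intro x hx
      rcases Finset.mem_biUnion.mp hx with ⟨v, hv, hxv⟩
      rcases hall v hv with h' | h'
      · rwa [h'] at hxv
      · rw [h'] at hxv; exact absurd hxv (Finset.notMem_empty x)
    · intro x hx
      exact Finset.mem_biUnion.mpr ⟨w, hw, by rwa [hwl]⟩

open scoped Classical

/-- A general `biUnion = singleton` characterization. -/
lemma biUnion_eq_singleton_iff (S : Finset α) (f : α → Finset α) (l : α) :
    S.biUnion f = {l} ↔
      (∀ w ∈ S, f w = {l} ∨ f w = ∅) ∧ (∃ w ∈ S, f w = {l}) := by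
  constructor
  · intro h
    constructor
    · intro w hw
      have hsub : f w ⊆ {l} := by
        rw [← h]; exact Finset.subset_biUnion_of_mem _ hw
      rcases Finset.subset_singleton_iff.mp hsub with h' | h'
      · right; exact h'
      · left; exact h'
    · have : l ∈ S.biUnion f := by rw [h]; exact Finset.mem_singleton_self l
      rcases Finset.mem_biUnion.mp this with ⟨w, hw, hl⟩
      refine ⟨w, hw, ?_⟩
      have hsub : f w ⊆ {l} := by
        rw [← h]; exact Finset.subset_biUnion_of_mem _ hw
      rcases Finset.subset_singleton_iff.mp hsub with h' | h'
      · rw [h'] at hl; exact absurd hl (Finset.notMem_empty l)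
      · exact h'
  · rintro ⟨hall, w, hw, hwl⟩
    apply Finset.Subset.antisymm
    · intro x hx
      rcases Finset.mem_biUnion.mp hx with ⟨v, hv, hxv⟩
      rcases hall v hv with h' | h'
      · rwa [h'] at hxv
      · rw [h'] at hxv; exact absurd hxv (Finset.notMem_empty x)
    · intro x hx
      exact Finset.mem_biUnion.mpr ⟨w, hw, by rwa [hwl]⟩

/-- Mortality: the reach set eventually dies. -/
def Mortal (w : α) : Prop := ∃ j, r G j w = ∅

noncomputable def dth (w : α) : ℕ := if h : Mortal G w then Nat.find h else 0

lemma dead_mono {w : α} {j j' : ℕ} (h : r G j w = ∅) (hj : j ≤ j') : r G j' w = ∅ := by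
  obtain ⟨s, rfl⟩ := Nat.exists_eq_add_of_le hj
  rw [r_add, h, iter_empty]

lemma dth_spec {w : α} (h : Mortal G w) : r G (dth G w) w = ∅ := by
  rw [dth, dif_pos h]; exact Nat.find_spec h

lemma dth_min {w : α} (h : Mortal G w) {j : ℕ} (hj : j < dth G w) : r G j w ≠ ∅ := by
  rw [dth, dif_pos h] at hj; exact Nat.find_min h hj

lemma dth_pos {w : α} (h : Mortal G w) : 0 < dth G w := by
  rcases Nat.eq_zero_or_pos (dth G w) with h0 | h0
  · exfalso
    have := dth_spec G h
    rw [h0] at this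
    simp [r_zero] at this
  · exact h0

lemma mortal_of_mem_r {w v : α} {j : ℕ} (hw : Mortal G w) (hv : v ∈ r G j w) :
    Mortal G v := by
  by_contra himm
  have hne : ∀ s, r G s v ≠ ∅ := fun s hs => himm ⟨s, hs⟩
  have hsub : ∀ s, r G s v ⊆ r G (j + s) w := by
    intro s
    rw [r_add]
    exact iter_mono G s (Finset.singleton_subset_iff.mpr hv)
  obtain ⟨d, hd⟩ := hw
  have h1 : r G (j + d) w = ∅ := dead_mono G hd (Nat.le_add_left d j)
  have h2 := hsub d
  rw [h1] at h2
  exact hne d (Finset.subset_empty.mp h2)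

lemma mortal_child {u v : α} (hu : Mortal G u) (hv : v ∈ G u) :
    Mortal G v ∧ dth G v < dth G u := by
  have hsub : ∀ s, r G s v ⊆ r G (s + 1) u := by
    intro s
    rw [r_succ']
    exact Finset.subset_biUnion_of_mem _ hv
  have hmv : Mortal G v := by
    obtain ⟨d, hd⟩ := hu
    refine ⟨d, ?_⟩
    have := hsub d
    have hd1 : r G (d + 1) u = ∅ := dead_mono G hd (Nat.le_succ d)
    rw [hd1] at this
    exact Finset.subset_empty.mp this
  refine ⟨hmv, ?_⟩
  have hvpos := dth_pos G hmv
  have h1 : r G (dth G v - 1) v ≠ ∅ := dth_min G hmv (Nat.sub_lt hvpos Nat.one_pos)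
  have h2 : r G (dth G v) u ≠ ∅ := by
    intro h
    apply h1
    have hsub' := hsub (dth G v - 1)
    rw [Nat.sub_add_cancel hvpos, h] at hsub'
    exact Finset.subset_empty.mp hsub'
  by_contra hlt
  push_neg at hlt
  exact h2 (dead_mono G (dth_spec G hu) hlt)

/-- The set of mortal nodes. -/
noncomputable def Mset : Finset α := Finset.univ.filter (fun w => Mortal G w)

lemma mem_Mset {w : α} : w ∈ Mset G ↔ Mortal G w := by simp [Mset]

/-- A mortal node dies within `|Mset|` steps. -/
lemma dth_le_card_Mset {w : α} (h : Mortal G w) : dth G w ≤ (Mset G).card := by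
  classical
  set d := dth G w with hd
  have hne : ∀ j, j < d → (r G j w).Nonempty :=
    fun j hj => Finset.nonempty_iff_ne_empty.mpr (dth_min G h hj)
  have hch : ∀ j, ∃ v, (j < d → v ∈ r G j w ∧ ∀ u ∈ r G j w, dth G u ≤ dth G v) := by
    intro j
    by_cases hj : j < d
    · obtain ⟨b, hb, hmax⟩ := Finset.exists_max_image (r G j w) (dth G) (hne j hj)
      exact ⟨b, fun _ => ⟨hb, hmax⟩⟩
    · exact ⟨w, fun hcon => absurd hcon hj⟩
  choose ws hws using hch
  have hmem : ∀ j, j < d → ws j ∈ r G j w := fun j hj => (hws j hj).1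
  have hmort : ∀ j, j < d → Mortal G (ws j) := fun j hj => mortal_of_mem_r G h (hmem j hj)
  have hdec : ∀ j, j + 1 < d → dth G (ws (j+1)) < dth G (ws j) := by
    intro j hj
    have hj' : j < d := Nat.lt_of_succ_lt hj
    have hmem1 : ws (j+1) ∈ Phi G (r G j w) := by
      rw [← r_succ]; exact hmem (j+1) hj
    rcases Finset.mem_biUnion.mp hmem1 with ⟨u, hu, hchild⟩
    have humort : Mortal G u := mortal_of_mem_r G h hu
    have h1 := (mortal_child G humort hchild).2
    exact Nat.lt_of_lt_of_le h1 ((hws j hj').2 u hu)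
  have hchain : ∀ b, b < d → ∀ a, a < b → dth G (ws b) < dth G (ws a) := by
    intro b
    induction b with
    | zero => intro _ a ha; exact absurd ha (Nat.not_lt_zero a)
    | succ b ih =>
        intro hb a ha
        have h1 : dth G (ws (b+1)) < dth G (ws b) := hdec b hb
        rcases Nat.lt_succ_iff_lt_or_eq.mp ha with ha' | rfl
        · exact Nat.lt_trans h1 (ih (Nat.lt_of_succ_lt hb) a ha')
        · exact h1
  have hinj : Set.InjOn ws (Finset.range d) := by
    intro a ha b hb hab
    simp only [Finset.coe_range, Set.mem_Iio] at ha hb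
    by_contra hne'
    rcases Nat.lt_or_ge a b with hlt | hge
    · have := hchain b hb a hlt; rw [hab] at this; exact Nat.lt_irrefl _ this
    · have hlt : b < a := Nat.lt_of_le_of_ne hge (fun hh => hne' hh.symm)
      have := hchain a ha b hlt; rw [hab] at this; exact Nat.lt_irrefl _ this
  have hmaps : ∀ j ∈ Finset.range d, ws j ∈ Mset G := by
    intro j hj
    exact (mem_Mset G).mpr (hmort j (Finset.mem_range.mp hj))
  calc d = (Finset.range d).card := (Finset.card_range d).symm
  _ ≤ (Mset G).card := Finset.card_le_card_of_injOn ws hmaps hinj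

section Target
variable (l : α)

/-- `w` eventually reaches exactly `{l}`. -/
def RT (w : α) : Prop := ∃ j, r G j w = {l}

noncomputable def eps (w : α) : ℕ := if h : RT G l w then Nat.find h else 0

lemma eps_spec {w : α} (h : RT G l w) : r G (eps G l w) w = {l} := by
  rw [eps, dif_pos h]; exact Nat.find_spec h

lemma eps_min {w : α} (h : RT G l w) {j : ℕ} (hj : j < eps G l w) : r G j w ≠ {l} := by
  rw [eps, dif_pos h] at hj; exact Nat.find_min h hj

lemma eps_le {w : α} {j : ℕ} (hj : r G j w = {l}) : eps G l w ≤ j := by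
  rw [eps, dif_pos ⟨j, hj⟩]; exact Nat.find_le hj

lemma r_zero_l : r G 0 l = {l} := rfl

lemma eps_l_eq_zero : eps G l l = 0 := Nat.le_zero.mp (eps_le G l (r_zero_l G l))

lemma r_shift {w : α} {j : ℕ} (hj : r G j w = {l}) (s : ℕ) : r G (j + s) w = r G s l := by
  rw [r_add, hj]; rfl

lemma climb {c : ℕ} (hc : r G c l = {l}) {w : α} {j : ℕ} (hj : r G j w = {l}) (q : ℕ) :
    r G (j + c * q) w = {l} := by
  induction q with
  | zero => simpa using hj
  | succ q ih =>
      have : j + c * (q + 1) = (j + c * q) + c := by ring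
      rw [this, r_shift G l ih c, hc]

section Cycle
variable {c : ℕ} (hc1 : 0 < c) (hc2 : r G c l = {l})
  (hcmin : ∀ c', 0 < c' → c' < c → r G c' l ≠ {l})

include hc1 hc2 hcmin

lemma cycle_dvd {w : α} {j j' : ℕ} (hj : r G j w = {l}) (hj' : r G j' w = {l})
    (hle : j ≤ j') : c ∣ (j' - j) := by
  set δ := j' - j with hδ
  have hδl : r G δ l = {l} := by
    have := r_shift G l hj δ
    rw [show j + δ = j' by omega, hj'] at this
    exact this.symm
  have hdiv : r G (c * (δ / c)) l = {l} := by
    have := climb G l hc2 (r_zero_l G l) (δ / c)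
    simpa using this
  have hmod : r G (δ % c) l = {l} := by
    have := r_shift G l hdiv (δ % c)
    rw [show c * (δ / c) + δ % c = δ from Nat.div_add_mod δ c, hδl] at this
    exact this.symm
  rcases Nat.eq_zero_or_pos (δ % c) with h0 | h0
  · exact Nat.dvd_of_mod_eq_zero h0
  · exact absurd hmod (hcmin _ h0 (Nat.mod_lt _ hc1))

lemma RT_immortal {w : α} (hw : RT G l w) : ¬ Mortal G w := by
  intro hm
  set d := dth G w with hd
  have h1 : r G (eps G l w + c * d) w = {l} := climb G l hc2 (eps_spec G l hw) d
  have h2 : r G (eps G l w + c * d) w = ∅ := by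
    apply dead_mono G (dth_spec G hm)
    calc d ≤ c * d := Nat.le_mul_of_pos_left d hc1
    _ ≤ eps G l w + c * d := Nat.le_add_left _ _
  rw [h1] at h2
  exact absurd h2 (Finset.singleton_ne_empty l)

lemma exists_eps_eq {v : ℕ} (hv : v < c) : ∃ y, RT G l y ∧ eps G l y = v := by
  rcases Nat.eq_zero_or_pos v with rfl | hvpos
  · exact ⟨l, ⟨0, r_zero_l G l⟩, eps_l_eq_zero G l⟩
  · have hsplit : r G ((c - v) + v) l = {l} := by
      rw [show (c - v) + v = c by omega]; exact hc2
    have : (Phi G)^[v] (r G (c - v) l) = {l} := by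
      rw [← r_add]; exact hsplit
    rcases ((iter_eq_singleton_iff G v (r G (c - v) l) l).mp this).2 with ⟨y, _, hy⟩
    have hRT : RT G l y := ⟨v, hy⟩
    refine ⟨y, hRT, ?_⟩
    have hle : eps G l y ≤ v := eps_le G l hy
    rcases Nat.lt_or_ge (eps G l y) v with hlt | hge
    · exfalso
      have hdvd := cycle_dvd G l hc1 hc2 hcmin (eps_spec G l hRT) hy (le_of_lt hlt)
      have : c ≤ v - eps G l y := Nat.le_of_dvd (by omega) hdvd
      omega
    · omega

lemma card_M_add_c_le : (Mset G).card + c ≤ Fintype.card α := by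
  classical
  have hch : ∀ v : ℕ, ∃ y, v < c → RT G l y ∧ eps G l y = v := by
    intro v
    by_cases hv : v < c
    · obtain ⟨y, hy⟩ := exists_eps_eq G l hc1 hc2 hcmin hv
      exact ⟨y, fun _ => hy⟩
    · exact ⟨l, fun h => absurd h hv⟩
  choose z hz using hch
  set RTset : Finset α := Finset.univ.filter (fun w => RT G l w) with hRTset
  have hmaps : ∀ v ∈ Finset.range c, z v ∈ RTset := by
    intro v hv
    simp only [hRTset, Finset.mem_filter, Finset.mem_univ, true_and]
    exact (hz v (Finset.mem_range.mp hv)).1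
  have hinj : Set.InjOn z (Finset.range c) := by
    intro a ha b hb hab
    simp only [Finset.coe_range, Set.mem_Iio] at ha hb
    have h1 := (hz a ha).2
    have h2 := (hz b hb).2
    rw [hab] at h1; rw [h1] at h2; exact h2
  have hcard : c ≤ RTset.card := by
    calc c = (Finset.range c).card := (Finset.card_range c).symm
    _ ≤ RTset.card := Finset.card_le_card_of_injOn z hmaps hinj
  have hdisj : Disjoint (Mset G) RTset := by
    rw [Finset.disjoint_left]
    intro w hw hw'
    simp only [hRTset, Finset.mem_filter, Finset.mem_univ, true_and] at hw'
    exact RT_immortal G l hc1 hc2 hcmin hw' ((mem_Mset G).mp hw)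
  calc (Mset G).card + c ≤ (Mset G).card + RTset.card := by omega
  _ = ((Mset G) ∪ RTset).card := (Finset.card_union_of_disjoint hdisj).symm
  _ ≤ Fintype.card α := Finset.card_le_univ _


/-- "No jump": at high levels, the minimal hit value `e` forces a node attaining `e-1`. -/
lemma exists_eps_pred {w : α} (hw : RT G l w) {e : ℕ} (he : eps G l w = e)
    (hbig : (Mset G).card + c + 1 ≤ e) : ∃ y, RT G l y ∧ eps G l y = e - 1 := by
  classical
  have he1 : 1 ≤ e := by omega
  have hrw : r G e w = {l} := by rw [← he]; exact eps_spec G l hw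
  have hbi : (G w).biUnion (r G (e - 1)) = {l} := by
    rw [← r_succ', show (e - 1) + 1 = e by omega]; exact hrw
  rcases (biUnion_eq_singleton_iff (G w) (r G (e-1)) l).mp hbi with ⟨hall, q0, hq0G, hq0⟩
  by_cases hgood : ∃ q ∈ G w, r G (e-1) q = {l} ∧ eps G l q = e - 1
  · rcases hgood with ⟨q, _, hq1, hq2⟩
    exact ⟨q, ⟨e-1, hq1⟩, hq2⟩
  · exfalso
    push_neg at hgood
    -- every live child has eps ≤ e - 1 - c
    have hchild : ∀ q ∈ G w, r G (e-1) q = {l} → r G (e-1-c) q = {l} := by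
      intro q hq hql
      have hRTq : RT G l q := ⟨e-1, hql⟩
      have hle : eps G l q ≤ e - 1 := eps_le G l hql
      have hne : eps G l q ≠ e - 1 := fun hh => hgood q hq hql hh
      have hdvd := cycle_dvd G l hc1 hc2 hcmin (eps_spec G l hRTq) hql (by omega)
      have hcle : c ≤ (e - 1) - eps G l q := Nat.le_of_dvd (by omega) hdvd
      obtain ⟨q', hq'⟩ := hdvd
      have h1 : (e - 1) - eps G l q = c * q' := hq'
      have hq'pos : 1 ≤ q' := by
        rcases Nat.eq_zero_or_pos q' with rfl | h
        · simp at h1; omega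
        · exact h
      obtain ⟨k, rfl⟩ : ∃ k, q' = k + 1 := ⟨q' - 1, by omega⟩
      have h2 : c * (k + 1) = c * k + c := by ring
      have hsplit : e - 1 - c = eps G l q + c * k := by omega
      rw [hsplit]
      exact climb G l hc2 (eps_spec G l hRTq) k
    have hdead : ∀ q ∈ G w, r G (e-1) q = ∅ → r G (e-1-c) q = ∅ := by
      intro q _ hql
      have hmq : Mortal G q := ⟨e-1, hql⟩
      apply dead_mono G (dth_spec G hmq)
      have := dth_le_card_Mset G hmq
      omega
    have hnew : r G (e - c) w = {l} := by
      rw [show e - c = (e - 1 - c) + 1 by omega, r_succ']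
      apply (biUnion_eq_singleton_iff (G w) (r G (e-1-c)) l).mpr
      constructor
      · intro q hq
        rcases hall q hq with h' | h'
        · left; exact hchild q hq h'
        · right; exact hdead q hq h'
      · exact ⟨q0, hq0G, hchild q0 hq0G hq0⟩
    have := eps_min G l hw (j := e - c) (by omega)
    exact this hnew

/-- Singleton bound: every minimal hit time is `< |α|`. -/
lemma eps_lt_card {w : α} (hw : RT G l w) : eps G l w < Fintype.card α := by
  classical
  set μ := (Mset G).card with hμ
  set e := eps G l w with he
  have hμc : μ + c ≤ Fintype.card α := card_M_add_c_le G l hc1 hc2 hcmin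
  rcases Nat.lt_or_ge e (μ + c) with hsmall | hbig
  · omega
  · -- every value in [μ+c, e] is attained as an eps-value
    by_contra hcon
    push_neg at hcon
    have hatt : ∀ d, d ≤ e - (μ + c) → ∃ y, RT G l y ∧ eps G l y = e - d := by
      intro d
      induction d with
      | zero => intro _; exact ⟨w, hw, by omega⟩
      | succ d ih =>
          intro hd
          obtain ⟨y, hy1, hy2⟩ := ih (by omega)
          have : ∃ y', RT G l y' ∧ eps G l y' = (e - d) - 1 :=
            exists_eps_pred G l hc1 hc2 hcmin hy1 hy2 (by omega)
          rcases this with ⟨y', hy'⟩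
          exact ⟨y', hy'.1, by omega⟩
    have hatt' : ∀ v : ℕ, ∃ y, (μ + c ≤ v ∧ v ≤ e) → RT G l y ∧ eps G l y = v := by
      intro v
      by_cases hv : μ + c ≤ v ∧ v ≤ e
      · obtain ⟨y, hy⟩ := hatt (e - v) (by omega)
        exact ⟨y, fun _ => ⟨hy.1, by omega⟩⟩
      · exact ⟨l, fun h => absurd h hv⟩
    choose x hx using hatt'
    have hchz : ∀ v : ℕ, ∃ y, v < c → RT G l y ∧ eps G l y = v := by
      intro v
      by_cases hv : v < c
      · obtain ⟨y, hy⟩ := exists_eps_eq G l hc1 hc2 hcmin hv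
        exact ⟨y, fun _ => hy⟩
      · exact ⟨l, fun h => absurd h hv⟩
    choose z hz using hchz
    set X1 : Finset α := (Finset.Icc (μ + c) e).image x with hX1
    set X2 : Finset α := (Finset.range c).image z with hX2
    have hcard1 : X1.card = e - (μ + c) + 1 := by
      rw [hX1, Finset.card_image_of_injOn, Nat.card_Icc]
      · omega
      · intro a ha b hb hab
        simp only [Finset.coe_Icc, Set.mem_Icc] at ha hb
        have h1 := (hx a ⟨ha.1, ha.2⟩).2
        have h2 := (hx b ⟨hb.1, hb.2⟩).2
        rw [hab] at h1; rw [h1] at h2; exact h2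
    have hcard2 : X2.card = c := by
      rw [hX2, Finset.card_image_of_injOn, Finset.card_range]
      intro a ha b hb hab
      simp only [Finset.coe_range, Set.mem_Iio] at ha hb
      have h1 := (hz a ha).2
      have h2 := (hz b hb).2
      rw [hab] at h1; rw [h1] at h2; exact h2
    have hd12 : Disjoint X1 X2 := by
      rw [Finset.disjoint_left]
      intro a ha1 ha2
      rw [hX1, Finset.mem_image] at ha1
      rw [hX2, Finset.mem_image] at ha2
      rcases ha1 with ⟨v1, hv1, rfl⟩
      rcases ha2 with ⟨v2, hv2, hzv⟩
      rw [Finset.mem_Icc] at hv1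
      rw [Finset.mem_range] at hv2
      have h1 := (hx v1 ⟨hv1.1, hv1.2⟩).2
      have h2 := (hz v2 hv2).2
      rw [hzv] at h2
      rw [h1] at h2
      omega
    have hd3 : Disjoint (X1 ∪ X2) (Mset G) := by
      rw [Finset.disjoint_left]
      intro a ha1 ha2
      have hRT : RT G l a := by
        rcases Finset.mem_union.mp ha1 with h | h
        · rw [hX1, Finset.mem_image] at h
          rcases h with ⟨v, hv, rfl⟩
          rw [Finset.mem_Icc] at hv
          exact (hx v ⟨hv.1, hv.2⟩).1
        · rw [hX2, Finset.mem_image] at h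
          rcases h with ⟨v, hv, rfl⟩
          rw [Finset.mem_range] at hv
          exact (hz v hv).1
      exact RT_immortal G l hc1 hc2 hcmin hRT ((mem_Mset G).mp ha2)
    have hfinal : (e - (μ + c) + 1) + c + μ ≤ Fintype.card α := by
      calc (e - (μ + c) + 1) + c + μ
          = (X1.card + X2.card) + (Mset G).card := by rw [hcard1, hcard2, hμ]
      _ = (X1 ∪ X2).card + (Mset G).card := by rw [Finset.card_union_of_disjoint hd12]
      _ = ((X1 ∪ X2) ∪ Mset G).card := (Finset.card_union_of_disjoint hd3).symm
      _ ≤ Fintype.card α := Finset.card_le_univ _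
    omega

end Cycle
end Target

/-- Main combinatorial theorem: if the iterated support hits exactly `{l}` at some
time, it does so at some time `< |α|`. -/
theorem exists_small_hit (S : Finset α) (l : α) (t : ℕ) (h : (Phi G)^[t] S = {l}) :
    ∃ t' < Fintype.card α, (Phi G)^[t'] S = {l} := by
  classical
  have hex : ∃ s, (Phi G)^[s] S = {l} := ⟨t, h⟩
  set T := Nat.find hex with hTdef
  have hTs : (Phi G)^[T] S = {l} := Nat.find_spec hex
  have hTmin : ∀ s, s < T → (Phi G)^[s] S ≠ {l} := fun s hs => Nat.find_min hex hs
  rcases Nat.lt_or_ge T (Fintype.card α) with hlt | hge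
  · exact ⟨T, hlt, hTs⟩
  exfalso
  by_cases hcyc : ∃ c, 0 < c ∧ r G c l = {l}
  · -- Case B : there is a cycle through l
    obtain ⟨hc1, hc2⟩ := Nat.find_spec hcyc
    set c := Nat.find hcyc with hcdef
    have hcmin : ∀ c', 0 < c' → c' < c → r G c' l ≠ {l} := by
      intro c' h1 h2 h3
      exact Nat.find_min hcyc h2 ⟨h1, h3⟩
    have hμc := card_M_add_c_le G l hc1 hc2 hcmin
    have hkey : ∀ w ∈ S, r G T w = {l} → r G (T - c) w = {l} := by
      intro w _ hwl
      have hRT : RT G l w := ⟨T, hwl⟩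
      have hepslt := eps_lt_card G l hc1 hc2 hcmin hRT
      have hepsle : eps G l w ≤ T := eps_le G l hwl
      have hdvd := cycle_dvd G l hc1 hc2 hcmin (eps_spec G l hRT) hwl hepsle
      have hcle : c ≤ T - eps G l w := Nat.le_of_dvd (by omega) hdvd
      obtain ⟨q, hq⟩ := hdvd
      have hqpos : 1 ≤ q := by
        rcases Nat.eq_zero_or_pos q with rfl | hh
        · simp at hq; omega
        · exact hh
      obtain ⟨k, rfl⟩ : ∃ k, q = k + 1 := ⟨q - 1, by omega⟩
      have h2 : c * (k + 1) = c * k + c := by ring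
      have hsplit : T - c = eps G l w + c * k := by omega
      rw [hsplit]
      exact climb G l hc2 (eps_spec G l hRT) k
    have hTc : (Phi G)^[T - c] S = {l} := by
      rcases (iter_eq_singleton_iff G T S l).mp hTs with ⟨hall, w0, hw0S, hw0⟩
      apply (iter_eq_singleton_iff G (T - c) S l).mpr
      constructor
      · intro w hw
        rcases hall w hw with h' | h'
        · left; exact hkey w hw h'
        · right
          have hm : Mortal G w := ⟨T, h'⟩
          apply dead_mono G (dth_spec G hm)
          have := dth_le_card_Mset G hm
          omega
      · exact ⟨w0, hw0S, hkey w0 hw0S hw0⟩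
    exact hTmin (T - c) (by omega) hTc
  · -- Case A : no cycle through l
    push_neg at hcyc
    have hch : ∀ j : ℕ, ∃ w, j ≤ T → r G j w = {l} := by
      intro j
      by_cases hj : j ≤ T
      · have hsplit : (Phi G)^[j] ((Phi G)^[T - j] S) = {l} := by
          rw [← Function.iterate_add_apply, show j + (T - j) = T by omega]
          exact hTs
        rcases ((iter_eq_singleton_iff G j _ l).mp hsplit).2 with ⟨w, _, hw⟩
        exact ⟨w, fun _ => hw⟩
      · exact ⟨l, fun hh => absurd hh hj⟩
    choose ws hws using hch
    have hinj : Set.InjOn ws (Finset.range (T+1)) := by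
      intro a ha b hb hab
      simp only [Finset.coe_range, Set.mem_Iio, Nat.lt_succ_iff] at ha hb
      by_contra hne
      have key : ∀ a b : ℕ, a ≤ T → b ≤ T → a < b → ws a = ws b → False := by
        intro a b ha hb hlt hab
        have h1 : r G a (ws a) = {l} := hws a ha
        have h2 : r G b (ws a) = {l} := by rw [hab]; exact hws b hb
        have h3 : r G (a + (b - a)) (ws a) = r G (b - a) l := r_shift G l h1 (b - a)
        rw [show a + (b - a) = b by omega, h2] at h3
        exact hcyc (b - a) (by omega) h3.symm
      rcases Nat.lt_or_ge a b with hlt | hgeq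
      · exact key a b ha hb hlt hab
      · exact key b a hb ha (by omega) hab.symm
    have : T + 1 ≤ Fintype.card α := by
      calc T + 1 = (Finset.range (T+1)).card := (Finset.card_range _).symm
      _ ≤ Finset.univ.card := Finset.card_le_card_of_injOn ws (fun j _ => Finset.mem_univ _) hinj
      _ = Fintype.card α := Finset.card_univ
    omega

end PRC

namespace PRB
open PRC
open scoped Classical

variable {n : ℕ}

/-- Support of a vector (positive entries). -/
noncomputable def supp (v : Fin n → ℝ) : Finset (Fin n) :=
  Finset.univ.filter (fun i => 0 < v i)

/-- Children map of a nonnegative matrix. -/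
noncomputable def Gmat (F : Matrix (Fin n) (Fin n) ℝ) : Fin n → Finset (Fin n) :=
  fun p => Finset.univ.filter (fun q => 0 < F q p)

lemma mem_supp {v : Fin n → ℝ} {i : Fin n} : i ∈ supp v ↔ 0 < v i := by simp [supp]

lemma mulVec_nonneg {F : Matrix (Fin n) (Fin n) ℝ} (hF : ∀ i j, 0 ≤ F i j)
    {v : Fin n → ℝ} (hv : ∀ i, 0 ≤ v i) : ∀ i, 0 ≤ F.mulVec v i := by
  intro i
  simp only [Matrix.mulVec, dotProduct]
  apply Finset.sum_nonneg
  intro p _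
  exact mul_nonneg (hF i p) (hv p)

lemma pow_entry_nonneg {F : Matrix (Fin n) (Fin n) ℝ} (hF : ∀ i j, 0 ≤ F i j) (t : ℕ) :
    ∀ i j, 0 ≤ (F ^ t) i j := by
  induction t with
  | zero =>
      intro i j
      simp only [pow_zero, Matrix.one_apply]
      split <;> norm_num
  | succ t ih =>
      intro i j
      rw [pow_succ, Matrix.mul_apply]
      apply Finset.sum_nonneg
      intro p _
      exact mul_nonneg (ih i p) (hF p j)

lemma supp_mulVec {F : Matrix (Fin n) (Fin n) ℝ} (hF : ∀ i j, 0 ≤ F i j)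
    {v : Fin n → ℝ} (hv : ∀ i, 0 ≤ v i) :
    supp (F.mulVec v) = Phi (Gmat F) (supp v) := by
  ext q
  simp only [mem_supp, Phi, Finset.mem_biUnion, Gmat, Finset.mem_filter, Finset.mem_univ,
    true_and]
  constructor
  · intro hq
    by_contra hcon
    push_neg at hcon
    have : F.mulVec v q = 0 := by
      simp only [Matrix.mulVec, dotProduct]
      apply Finset.sum_eq_zero
      intro p _
      rcases lt_or_eq_of_le (hv p) with hvp | hvp
      · have hFp : F q p = 0 := le_antisymm (hcon p hvp) (hF q p)
        simp [hFp]
      · simp [← hvp]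
    rw [this] at hq
    exact lt_irrefl 0 hq
  · rintro ⟨p, hp, hFp⟩
    have hterm : 0 < F q p * v p := mul_pos hFp hp
    calc (0:ℝ) < F q p * v p := hterm
    _ ≤ F.mulVec v q := by
        simp only [Matrix.mulVec, dotProduct]
        apply Finset.single_le_sum (f := fun p => F q p * v p)
        · intro x _; exact mul_nonneg (hF q x) (hv x)
        · exact Finset.mem_univ p

lemma supp_pow_mulVec {F : Matrix (Fin n) (Fin n) ℝ} (hF : ∀ i j, 0 ≤ F i j)
    {v : Fin n → ℝ} (hv : ∀ i, 0 ≤ v i) (t : ℕ) :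
    supp ((F ^ t).mulVec v) = (Phi (Gmat F))^[t] (supp v) := by
  induction t with
  | zero => simp [Matrix.one_mulVec]
  | succ t ih =>
      have h1 : (F ^ (t+1)).mulVec v = F.mulVec ((F ^ t).mulVec v) := by
        rw [Matrix.mulVec_mulVec, ← pow_succ']
      rw [h1, supp_mulVec hF (mulVec_nonneg (pow_entry_nonneg hF t) hv), ih,
        Function.iterate_succ_apply']

lemma monomial_iff {v : Fin n → ℝ} (hv : ∀ i, 0 ≤ v i) (l : Fin n) :
    (∃ c : ℝ, 0 < c ∧ v = c • (Pi.single l 1 : Fin n → ℝ)) ↔ supp v = {l} := by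
  constructor
  · rintro ⟨c, hc, rfl⟩
    ext q
    simp only [mem_supp, Finset.mem_singleton, Pi.smul_apply, smul_eq_mul]
    rw [Pi.single_apply]
    constructor
    · intro h
      by_contra hne
      simp [hne] at h
    · intro h; simp [h, hc]
  · intro hs
    have hl : 0 < v l := mem_supp.mp (by rw [hs]; exact Finset.mem_singleton_self l)
    refine ⟨v l, hl, ?_⟩
    funext q
    simp only [Pi.smul_apply, smul_eq_mul]
    rw [Pi.single_apply]
    by_cases hq : q = l
    · subst hq; simp
    · have : q ∉ supp v := by rw [hs]; simp [hq]
      rw [mem_supp] at this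
      push_neg at this
      simp [hq]
      linarith [hv q, this]

end PRB

namespace PRMain
open PRC PRB
open scoped Classical

variable {n m : ℕ} (F : Matrix (Fin n) (Fin n) ℝ) (B : Matrix (Fin n) (Fin m) ℝ)

/-- Expansion of a reachability term over the columns of `B`. -/
lemma expand (i : ℕ) (q : Fin n) (v : Fin m → ℝ) :
    ((F ^ i).mulVec (B.mulVec v)) q
      = ∑ j, v j * ((F ^ i).mulVec (fun p => B p j)) q := by
  simp only [Matrix.mulVec, dotProduct, Finset.mul_sum]
  rw [Finset.sum_comm]
  apply Finset.sum_congr rfl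
  intro j _
  apply Finset.sum_congr rfl
  intro p _
  ring

/-- The "monomial submatrix" condition. -/
def Mono : Prop :=
  ∃ (f : Fin n → Fin n × Fin m) (c : Fin n → ℝ), (∀ l, 0 < c l) ∧
    ∀ l, ((F ^ ((f l).1 : ℕ)).mulVec fun p => B p (f l).2) = c l • (Pi.single l 1 : Fin n → ℝ)

variable {F B}

lemma single_nonneg' (l : Fin n) : ∀ i, 0 ≤ (Pi.single l 1 : Fin n → ℝ) i := by
  intro i
  rw [Pi.single_apply]
  split <;> norm_num

lemma reach_extract (hF : ∀ i j, 0 ≤ F i j) (hB : ∀ i j, 0 ≤ B i j)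
    {k : ℕ} (hP : PosReach F B k) (l : Fin n) :
    ∃ (i : ℕ), i < n ∧ ∃ (j : Fin m) (c : ℝ), 0 < c ∧
      (F ^ i).mulVec (fun p => B p j) = c • (Pi.single l 1 : Fin n → ℝ) := by
  obtain ⟨u, hu, hx⟩ := hP (Pi.single l 1) (single_nonneg' l)
  -- nonnegativity of the basic vectors
  have hwn : ∀ (i : ℕ) (j : Fin m), ∀ q, 0 ≤ ((F ^ i).mulVec (fun p => B p j)) q :=
    fun i j => mulVec_nonneg (pow_entry_nonneg hF i) (fun p => hB p j)
  have hpt : ∀ q, (Pi.single l 1 : Fin n → ℝ) q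
      = ∑ i ∈ Finset.range k, ∑ j, u i j * ((F ^ i).mulVec (fun p => B p j)) q := by
    intro q
    conv_lhs => rw [hx]
    rw [Finset.sum_apply]
    apply Finset.sum_congr rfl
    intro i _
    exact expand F B i q (u i)
  -- extract a positive term at coordinate l
  have hl : (0:ℝ) < ∑ i ∈ Finset.range k, ∑ j, u i j * ((F ^ i).mulVec (fun p => B p j)) l := by
    rw [← hpt l]
    simp
  have hterm : ∃ i ∈ Finset.range k, ∃ j : Fin m,
      0 < u i j * ((F ^ i).mulVec (fun p => B p j)) l := by
    by_contra hcon
    push_neg at hcon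
    have : ∑ i ∈ Finset.range k, ∑ j, u i j * ((F ^ i).mulVec (fun p => B p j)) l = 0 := by
      apply Finset.sum_eq_zero
      intro i hi
      apply Finset.sum_eq_zero
      intro j _
      have h1 := hcon i hi j
      have h2 : 0 ≤ u i j * ((F ^ i).mulVec (fun p => B p j)) l :=
        mul_nonneg (hu i j) (hwn i j l)
      linarith
    rw [this] at hl
    exact lt_irrefl 0 hl
  obtain ⟨i0, hi0k, j0, hij⟩ := hterm
  have hu0 : 0 < u i0 j0 := by
    rcases lt_or_eq_of_le (hu i0 j0) with h | h
    · exact h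
    · exfalso; rw [← h, zero_mul] at hij; exact lt_irrefl 0 hij
  have hw0 : 0 < ((F ^ i0).mulVec (fun p => B p j0)) l := by
    by_contra h
    push_neg at h
    have := mul_nonpos_of_nonneg_of_nonpos (le_of_lt hu0) h
    linarith
  -- zero off l
  have hoff : ∀ q, q ≠ l → ((F ^ i0).mulVec (fun p => B p j0)) q = 0 := by
    intro q hq
    have hzero : ∑ i ∈ Finset.range k, ∑ j, u i j * ((F ^ i).mulVec (fun p => B p j)) q = 0 := by
      rw [← hpt q, Pi.single_apply, if_neg hq]
    have hterms : ∀ i ∈ Finset.range k, ∀ j : Fin m,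
        u i j * ((F ^ i).mulVec (fun p => B p j)) q = 0 := by
      have houter := (Finset.sum_eq_zero_iff_of_nonneg ?_).mp hzero
      · intro i hi j
        have hinner := (Finset.sum_eq_zero_iff_of_nonneg ?_).mp (houter i hi)
        · exact hinner j (Finset.mem_univ j)
        · intro j' _
          exact mul_nonneg (hu i j') (hwn i j' q)
      · intro i _
        apply Finset.sum_nonneg
        intro j' _
        exact mul_nonneg (hu i j') (hwn i j' q)
    have := hterms i0 hi0k j0
    rcases mul_eq_zero.mp this with h | h
    · exact absurd h (ne_of_gt hu0)
    · exact h
  -- support is exactly {l}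
  have hsupp : supp ((F ^ i0).mulVec (fun p => B p j0)) = {l} := by
    ext q
    simp only [mem_supp, Finset.mem_singleton]
    constructor
    · intro h
      by_contra hq
      rw [hoff q hq] at h
      exact lt_irrefl 0 h
    · rintro rfl; exact hw0
  -- move to the combinatorial world and reduce the exponent
  have hBn : ∀ p, 0 ≤ B p j0 := fun p => hB p j0
  rw [supp_pow_mulVec hF hBn] at hsupp
  obtain ⟨t', ht', hsupp'⟩ := exists_small_hit (Gmat F) (supp (fun p => B p j0)) l i0 hsupp
  rw [← supp_pow_mulVec hF hBn] at hsupp'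
  rw [Fintype.card_fin] at ht'
  obtain ⟨c, hc, hcv⟩ := (monomial_iff (mulVec_nonneg (pow_entry_nonneg hF t') hBn) l).mpr hsupp'
  exact ⟨t', ht', j0, c, hc, hcv⟩

lemma mono_posreach (hM : Mono F B) {k : ℕ} (hk : n ≤ k) : PosReach F B k := by
  obtain ⟨f, c, hc, hfc⟩ := hM
  intro xbar hxbar
  set φ : Fin n → ℕ × Fin m := fun l => (((f l).1 : ℕ), (f l).2) with hφ
  refine ⟨fun i j => ∑ l ∈ Finset.univ.filter (fun l => φ l = (i, j)), xbar l / c l, ?_, ?_⟩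
  · intro i j
    apply Finset.sum_nonneg
    intro l _
    exact div_nonneg (hxbar l) (le_of_lt (hc l))
  · funext q
    rw [Finset.sum_apply]
    have hstep : ∀ i ∈ Finset.range k,
        ((F ^ i).mulVec (B.mulVec (fun j => ∑ l ∈ Finset.univ.filter (fun l => φ l = (i, j)), xbar l / c l))) q
        = ∑ j, ∑ l ∈ Finset.univ.filter (fun l => φ l = (i, j)), (xbar l / c l) * (c l * (Pi.single l 1 : Fin n → ℝ) q) := by
      intro i _
      rw [expand]
      apply Finset.sum_congr rfl
      intro j _
      rw [Finset.sum_mul]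
      apply Finset.sum_congr rfl
      intro l hl
      simp only [Finset.mem_filter, Finset.mem_univ, true_and, hφ, Prod.mk.injEq] at hl
      have h1 : ((F ^ i).mulVec (fun p => B p j)) q = c l * (Pi.single l 1 : Fin n → ℝ) q := by
        rw [← hl.1, ← hl.2]
        have := congrFun (hfc l) q
        simpa using this
      rw [h1]
    rw [Finset.sum_congr rfl hstep]
    -- collapse the fiberwise sum
    have hmaps : ∀ l : Fin n, l ∈ (Finset.univ : Finset (Fin n)) →
        φ l ∈ Finset.range k ×ˢ (Finset.univ : Finset (Fin m)) := by
      intro l _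
      simp only [Finset.mem_product, Finset.mem_range, Finset.mem_univ, and_true, hφ]
      exact lt_of_lt_of_le (f l).1.isLt hk
    have hfiber := Finset.sum_fiberwise_of_maps_to hmaps
      (fun l => (xbar l / c l) * (c l * (Pi.single l 1 : Fin n → ℝ) q))
    have hprod : ∑ p ∈ Finset.range k ×ˢ (Finset.univ : Finset (Fin m)),
        ∑ l ∈ Finset.univ.filter (fun l => φ l = p), (xbar l / c l) * (c l * (Pi.single l 1 : Fin n → ℝ) q)
        = ∑ i ∈ Finset.range k, ∑ j, ∑ l ∈ Finset.univ.filter (fun l => φ l = (i, j)), (xbar l / c l) * (c l * (Pi.single l 1 : Fin n → ℝ) q) := by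
      rw [Finset.sum_product]
    rw [← hprod, hfiber]
    have hsimpl : ∀ l : Fin n, (xbar l / c l) * (c l * (Pi.single l 1 : Fin n → ℝ) q)
        = xbar l * (Pi.single l 1 : Fin n → ℝ) q := by
      intro l
      have hcl : (c l) ≠ 0 := ne_of_gt (hc l)
      field_simp
    rw [Finset.sum_congr rfl (fun l _ => hsimpl l)]
    have : ∑ l, xbar l * (Pi.single l 1 : Fin n → ℝ) q = xbar q := by
      rw [Finset.sum_congr rfl (fun l (_ : l ∈ Finset.univ) => by
        rw [Pi.single_apply, mul_ite, mul_one, mul_zero])]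
      rw [Finset.sum_ite_eq]
      simp
    rw [this]

lemma posreach_iff_mono (hF : ∀ i j, 0 ≤ F i j) (hB : ∀ i j, 0 ≤ B i j)
    {k : ℕ} (hk : n ≤ k) : PosReach F B k ↔ Mono F B := by
  constructor
  · intro hP
    have hch : ∀ l : Fin n, ∃ (p : Fin n × Fin m) (c : ℝ), 0 < c ∧
        (F ^ (p.1 : ℕ)).mulVec (fun q => B q p.2) = c • (Pi.single l 1 : Fin n → ℝ) := by
      intro l
      obtain ⟨i, hi, j, c, hc, hv⟩ := reach_extract hF hB hP l
      exact ⟨(⟨i, hi⟩, j), c, hc, hv⟩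
    choose f cf hcf1 hcf2 using hch
    exact ⟨f, cf, hcf1, hcf2⟩
  · intro hM
    exact mono_posreach hM hk

end PRMain

theorem discrete_positive_reachability (n m : ℕ)
    (F : Matrix (Fin n) (Fin n) ℝ) (B : Matrix (Fin n) (Fin m) ℝ)
    (hF : ∀ i j, 0 ≤ F i j) (hB : ∀ i j, 0 ≤ B i j) (k : ℕ) (hk : n ≤ k) :
    (PosReach F B k ↔
      ∃ (f : Fin n → Fin n × Fin m) (c : Fin n → ℝ), (∀ l, 0 < c l) ∧
        ∀ l, ((F ^ ((f l).1 : ℕ)).mulVec fun p => B p (f l).2) = c l • (Pi.single l 1 : Fin n → ℝ)) ∧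
    (PosReach F B k ↔ PosReach F B n) := by
  constructor
  · exact PRMain.posreach_iff_mono hF hB hk
  · exact (PRMain.posreach_iff_mono hF hB hk).trans
      (PRMain.posreach_iff_mono hF hB (le_refl n)).symm
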